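/- Fix δ ∈ (0,1), κ > 0, ξ > 0 and let 𝒱_{δ,κ,ξ} : [0,1] → [0,1] be defined by 𝒱_{δ,κ,ξ}(u) = 1 − u − (1−δ)·exp(−κ·(−ln(u/δ))^ξ) for u ≤ δ and 𝒱_{δ,κ,ξ}(u) = u − δ·exp(−κ^{−1/ξ}·(−ln((1−u)/(1−δ)))^{1/ξ}) for u > δ. If U is uniformly distributed on [0,1], then 𝒱_{δ,κ,ξ}(U) is uniformly distributed on [0,1]; i.e., 𝒱_{δ,κ,ξ} is a uniformity-preserving transformation. -/

import Mathlib

/-!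
STATEMENT 16: the parametric family `𝒱_{δ,κ,ξ}` is uniformity preserving: if `U`
is uniform on `[0,1]` then so is `𝒱_{δ,κ,ξ}(U)`.
-/

open Set MeasureTheory

/-- The parametric family of v-transforms `𝒱_{δ,κ,ξ}`:
`𝒱(u) = 1 - u - (1-δ)·exp(-κ·(-ln(u/δ))^ξ)` for `u ≤ δ` and
`𝒱(u) = u - δ·exp(-κ^{-1/ξ}·(-ln((1-u)/(1-δ)))^{1/ξ})` for `u > δ`.
(The endpoint values `𝒱(0) = 𝒱(1) = 1`, which are the limiting values of the two
branches, are written explicitly since `Real.log 0 = 0` in Lean.) -/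
noncomputable def Vfam (δ κ ξ : ℝ) (u : ℝ) : ℝ :=
  if u = 0 then 1
  else if u ≤ δ then 1 - u - (1 - δ) * Real.exp (-κ * (-Real.log (u / δ)) ^ ξ)
  else if u = 1 then 1
  else u - δ * Real.exp (-(κ ^ (-1 / ξ)) * (-Real.log ((1 - u) / (1 - δ))) ^ (1 / ξ))

namespace VfamAux

open Filter Real

variable (δ κ ξ : ℝ)

/-- The left branch. -/
noncomputable def VL (u : ℝ) : ℝ :=
  1 - u - (1 - δ) * Real.exp (-κ * (-Real.log (u / δ)) ^ ξ)

/-- The right branch. -/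
noncomputable def VR (u : ℝ) : ℝ :=
  u - δ * Real.exp (-(κ ^ (-1 / ξ)) * (-Real.log ((1 - u) / (1 - δ))) ^ (1 / ξ))

variable {δ κ ξ}

lemma Vfam_eq_left {u : ℝ} (h0 : 0 < u) (h : u ≤ δ) : Vfam δ κ ξ u = VL δ κ ξ u := by
  simp [Vfam, VL, h0.ne', h]

lemma Vfam_eq_right (h0 : 0 < δ) {u : ℝ} (h : δ < u) (h1 : u < 1) :
    Vfam δ κ ξ u = VR δ κ ξ u := by
  simp [Vfam, VR, (h0.trans h).ne', not_le.mpr h, h1.ne]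

lemma Vfam_zero : Vfam δ κ ξ 0 = 1 := by simp [Vfam]

lemma Vfam_one (hδ1 : δ < 1) : Vfam δ κ ξ 1 = 1 := by
  simp [Vfam, not_le.mpr hδ1]

lemma VL_delta (h0 : 0 < δ) (hξ : 0 < ξ) : VL δ κ ξ δ = 0 := by
  simp [VL, div_self h0.ne', Real.zero_rpow hξ.ne']

/-- strict antitonicity of the left branch. -/
lemma VL_anti (hδ1 : δ < 1) (hκ : 0 < κ) (hξ : 0 < ξ) {u₁ u₂ : ℝ}
    (h1 : 0 < u₁) (h12 : u₁ < u₂) (h2 : u₂ ≤ δ) : VL δ κ ξ u₂ < VL δ κ ξ u₁ := by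
  have hδ0 : 0 < δ := lt_of_lt_of_le (h1.trans h12) h2
  have ht2 : 0 ≤ -Real.log (u₂ / δ) := by
    rw [neg_nonneg]
    exact Real.log_nonpos (le_of_lt (div_pos (h1.trans h12) hδ0)) (div_le_one_of_le₀ h2 hδ0.le)
  have ht : -Real.log (u₂ / δ) < -Real.log (u₁ / δ) := by
    have := Real.log_lt_log (div_pos h1 hδ0) (div_lt_div_of_pos_right h12 hδ0 : u₁/δ < u₂/δ)
    linarith
  have hr : (-Real.log (u₂ / δ)) ^ ξ < (-Real.log (u₁ / δ)) ^ ξ :=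
    Real.rpow_lt_rpow ht2 ht hξ
  have he : Real.exp (-κ * (-Real.log (u₁ / δ)) ^ ξ) < Real.exp (-κ * (-Real.log (u₂ / δ)) ^ ξ) :=
    Real.exp_lt_exp.mpr (by nlinarith)
  have h1δ : 0 < 1 - δ := by linarith
  unfold VL; nlinarith

/-- the left branch is at least `δ - u`. -/
lemma VL_ge (hδ1 : δ < 1) (hκ : 0 < κ) (hξ : 0 < ξ) {u : ℝ} (h0 : 0 < u) (h : u ≤ δ) :
    δ - u ≤ VL δ κ ξ u := by
  have hδ0 : 0 < δ := h0.trans_le h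
  have ht : 0 ≤ -Real.log (u / δ) := by
    rw [neg_nonneg]; exact Real.log_nonpos (le_of_lt (div_pos h0 hδ0)) (div_le_one_of_le₀ h hδ0.le)
  have hE : Real.exp (-κ * (-Real.log (u / δ)) ^ ξ) ≤ 1 := by
    rw [Real.exp_le_one_iff]
    have := Real.rpow_nonneg ht ξ
    nlinarith
  have h1δ : 0 < 1 - δ := by linarith
  unfold VL; nlinarith

lemma VL_le_one (hδ1 : δ < 1) {u : ℝ} (h0 : 0 ≤ u) : VL δ κ ξ u ≤ 1 := by
  have := Real.exp_pos (-κ * (-Real.log (u / δ)) ^ ξ)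
  unfold VL; nlinarith

/-- strict monotonicity of the right branch. -/
lemma VR_mono (hδ : δ ∈ Set.Ioo (0:ℝ) 1) (hκ : 0 < κ) (hξ : 0 < ξ) {u₁ u₂ : ℝ}
    (h1 : δ < u₁) (h12 : u₁ < u₂) (h2 : u₂ < 1) : VR δ κ ξ u₁ < VR δ κ ξ u₂ := by
  obtain ⟨hδ0, hδ1⟩ := hδ
  have h1δ : 0 < 1 - δ := by linarith
  have ht1 : 0 ≤ -Real.log ((1 - u₁) / (1 - δ)) := by
    rw [neg_nonneg]
    exact Real.log_nonpos (le_of_lt (div_pos (by linarith) h1δ)) ((div_le_one h1δ).mpr (by linarith))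
  have ht : -Real.log ((1 - u₁) / (1 - δ)) < -Real.log ((1 - u₂) / (1 - δ)) := by
    have := Real.log_lt_log (div_pos (by linarith) h1δ : (0:ℝ) < (1 - u₂) / (1 - δ))
      (div_lt_div_of_pos_right (by linarith) h1δ : (1 - u₂)/(1-δ) < (1 - u₁)/(1-δ))
    linarith
  have hr : (-Real.log ((1 - u₁) / (1 - δ))) ^ (1/ξ) < (-Real.log ((1 - u₂) / (1 - δ))) ^ (1/ξ) :=
    Real.rpow_lt_rpow ht1 ht (by positivity)
  have hc : 0 < κ ^ (-1/ξ) := Real.rpow_pos_of_pos hκ _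
  have he : Real.exp (-(κ ^ (-1/ξ)) * (-Real.log ((1 - u₂) / (1 - δ))) ^ (1/ξ)) <
      Real.exp (-(κ ^ (-1/ξ)) * (-Real.log ((1 - u₁) / (1 - δ))) ^ (1/ξ)) :=
    Real.exp_lt_exp.mpr (by nlinarith)
  unfold VR; nlinarith

/-- the right branch is at least `u - δ`. -/
lemma VR_ge (hδ : δ ∈ Set.Ioo (0:ℝ) 1) (hκ : 0 < κ) (hξ : 0 < ξ) {u : ℝ}
    (h1 : δ < u) (h2 : u < 1) : u - δ ≤ VR δ κ ξ u := by
  obtain ⟨hδ0, hδ1⟩ := hδ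
  have h1δ : 0 < 1 - δ := by linarith
  have ht : 0 ≤ -Real.log ((1 - u) / (1 - δ)) := by
    rw [neg_nonneg]
    exact Real.log_nonpos (le_of_lt (div_pos (by linarith) h1δ)) ((div_le_one h1δ).mpr (by linarith))
  have hc : 0 < κ ^ (-1/ξ) := Real.rpow_pos_of_pos hκ _
  have hE : Real.exp (-(κ ^ (-1/ξ)) * (-Real.log ((1 - u) / (1 - δ))) ^ (1/ξ)) ≤ 1 := by
    rw [Real.exp_le_one_iff]
    have := Real.rpow_nonneg ht (1/ξ)
    nlinarith
  unfold VR; nlinarith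

lemma VR_le (hδ0 : 0 ≤ δ) {u : ℝ} : VR δ κ ξ u ≤ u := by
  have := Real.exp_pos (-(κ ^ (-1/ξ)) * (-Real.log ((1 - u) / (1 - δ))) ^ (1/ξ))
  unfold VR; nlinarith

/-- the v-transform duality: for `0 < u < δ`, the dual point `u + VL u` lies in `(δ, 1)`
and the right branch takes the same value there. -/
lemma dual (hδ : δ ∈ Set.Ioo (0:ℝ) 1) (hκ : 0 < κ) (hξ : 0 < ξ) {u : ℝ}
    (h0 : 0 < u) (hu : u < δ) :
    δ < u + VL δ κ ξ u ∧ u + VL δ κ ξ u < 1 ∧ VR δ κ ξ (u + VL δ κ ξ u) = VL δ κ ξ u := by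
  obtain ⟨hδ0, hδ1⟩ := hδ
  have h1δ : 0 < 1 - δ := by linarith
  set t : ℝ := -Real.log (u / δ) with ht_def
  have ht : 0 < t := by
    rw [ht_def, neg_pos]
    exact Real.log_neg (by positivity) ((div_lt_one hδ0).mpr hu)
  set E : ℝ := Real.exp (-κ * t ^ ξ) with hE_def
  have hE0 : 0 < E := Real.exp_pos _
  have hE1 : E < 1 := by
    rw [hE_def, Real.exp_lt_one_iff]
    have := Real.rpow_pos_of_pos ht ξ
    nlinarith
  have hw : u + VL δ κ ξ u = 1 - (1 - δ) * E := by unfold VL; ring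
  have hw1 : u + VL δ κ ξ u < 1 := by nlinarith
  have hwδ : δ < u + VL δ κ ξ u := by nlinarith
  refine ⟨hwδ, hw1, ?_⟩
  have hratio : (1 - (u + VL δ κ ξ u)) / (1 - δ) = E := by
    rw [hw]; field_simp; ring
  have hlog : -Real.log ((1 - (u + VL δ κ ξ u)) / (1 - δ)) = κ * t ^ ξ := by
    rw [hratio, hE_def, Real.log_exp]; ring
  have hrpow : (κ * t ^ ξ) ^ (1/ξ) = κ ^ (1/ξ) * t := by
    rw [Real.mul_rpow hκ.le (Real.rpow_nonneg ht.le ξ), ← Real.rpow_mul ht.le,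
      mul_one_div, div_self hξ.ne', Real.rpow_one]
  have hκκ : κ ^ (-1/ξ) * κ ^ (1/ξ) = 1 := by
    rw [← Real.rpow_add hκ]; ring_nf; exact Real.rpow_zero κ
  have hexp : -(κ ^ (-1/ξ)) * (-Real.log ((1 - (u + VL δ κ ξ u)) / (1 - δ))) ^ (1/ξ) = -t := by
    rw [hlog, hrpow]
    have : κ ^ (-1/ξ) * (κ ^ (1/ξ) * t) = t := by rw [← mul_assoc, hκκ, one_mul]
    linarith [this]
  have hfin : δ * Real.exp (-t) = u := by
    rw [ht_def, neg_neg, Real.exp_log (by positivity)]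
    field_simp
  unfold VR
  rw [hexp, hfin]; ring

/-- existence of a point on the left branch attaining any value `v ∈ [0,1)`. -/
lemma exists_left (hδ : δ ∈ Set.Ioo (0:ℝ) 1) (hκ : 0 < κ) (hξ : 0 < ξ) {v : ℝ}
    (h0 : 0 ≤ v) (h1 : v < 1) : ∃ a, 0 < a ∧ a ≤ δ ∧ VL δ κ ξ a = v := by
  obtain ⟨hδ0, hδ1⟩ := hδ
  -- the limit of VL at 0⁺ is 1
  have hlog : Tendsto (fun u : ℝ => Real.log (u / δ)) (nhdsWithin 0 (Set.Ioi 0)) atBot := by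
    have h : Tendsto (fun u : ℝ => Real.log u + (- Real.log δ)) (nhdsWithin 0 (Set.Ioi 0)) atBot :=
      tendsto_atBot_add_const_right _ _ Real.tendsto_log_nhdsGT_zero
    refine h.congr' ?_
    filter_upwards [self_mem_nhdsWithin] with u (hu : 0 < u)
    rw [Real.log_div hu.ne' hδ0.ne']; ring
  have hneg : Tendsto (fun u : ℝ => -Real.log (u / δ)) (nhdsWithin 0 (Set.Ioi 0)) atTop :=
    tendsto_neg_atBot_atTop.comp hlog
  have hrpow : Tendsto (fun u : ℝ => (-Real.log (u / δ)) ^ ξ) (nhdsWithin 0 (Set.Ioi 0)) atTop :=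
    (tendsto_rpow_atTop hξ).comp hneg
  have hmul : Tendsto (fun u : ℝ => -κ * (-Real.log (u / δ)) ^ ξ) (nhdsWithin 0 (Set.Ioi 0)) atBot := by
    have := (hrpow.const_mul_atTop hκ)
    have h2 : Tendsto (fun u : ℝ => -(κ * (-Real.log (u / δ)) ^ ξ)) (nhdsWithin 0 (Set.Ioi 0)) atBot :=
      tendsto_neg_atTop_atBot.comp this
    refine h2.congr (fun u => by ring)
  have hexp : Tendsto (fun u : ℝ => Real.exp (-κ * (-Real.log (u / δ)) ^ ξ))
      (nhdsWithin 0 (Set.Ioi 0)) (nhds 0) := Real.tendsto_exp_atBot.comp hmul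
  have hVL : Tendsto (VL δ κ ξ) (nhdsWithin 0 (Set.Ioi 0)) (nhds 1) := by
    unfold VL
    have hid : Tendsto (fun u : ℝ => u) (nhdsWithin 0 (Set.Ioi 0)) (nhds 0) :=
      tendsto_id.mono_left nhdsWithin_le_nhds
    have := (tendsto_const_nhds (x := (1:ℝ))).sub hid |>.sub
      ((tendsto_const_nhds (x := (1 - δ))).mul hexp)
    simpa using this
  -- find x ∈ (0, δ) with VL x > v
  have hev : ∀ᶠ u in nhdsWithin (0:ℝ) (Set.Ioi 0), v < VL δ κ ξ u ∧ u < δ ∧ 0 < u := by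
    filter_upwards [hVL.eventually (eventually_gt_nhds h1),
      eventually_nhdsWithin_of_eventually_nhds (eventually_lt_nhds hδ0),
      self_mem_nhdsWithin] with u h1 h2 h3
    exact ⟨h1, h2, h3⟩
  obtain ⟨x, hxv, hxδ, hx0⟩ := hev.exists
  -- IVT on [x, δ]
  have hcont : ContinuousOn (VL δ κ ξ) (Set.Icc x δ) := by
    intro u hu
    have hu0 : 0 < u := lt_of_lt_of_le hx0 hu.1
    apply ContinuousAt.continuousWithinAt
    have c1 : ContinuousAt (fun u : ℝ => -Real.log (u / δ)) u :=
      ((Real.continuousAt_log (by positivity)).comp (continuousAt_id.div_const δ)).neg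
    have c2 : ContinuousAt (fun u : ℝ => (-Real.log (u / δ)) ^ ξ) u :=
      ((Real.continuous_rpow_const hξ.le).continuousAt).comp c1
    exact (continuousAt_const.sub continuousAt_id).sub
      (continuousAt_const.mul ((Real.continuous_exp.continuousAt).comp
        (continuousAt_const.mul c2)))
  have hsub := intermediate_value_Icc' (le_of_lt hxδ) hcont
  have hv_mem : v ∈ Set.Icc (VL δ κ ξ δ) (VL δ κ ξ x) := by
    rw [VL_delta hδ0 hξ]
    exact ⟨h0, hxv.le⟩
  obtain ⟨a, ha, hav⟩ := hsub hv_mem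
  exact ⟨a, lt_of_lt_of_le hx0 ha.1, ha.2, hav⟩

lemma Vfam_nonneg (hδ : δ ∈ Set.Ioo (0:ℝ) 1) (hκ : 0 < κ) (hξ : 0 < ξ) {u : ℝ}
    (hu : u ∈ Set.Icc (0:ℝ) 1) : 0 ≤ Vfam δ κ ξ u := by
  obtain ⟨hu0, hu1⟩ := hu
  rcases eq_or_lt_of_le hu0 with h0 | h0
  · rw [← h0, Vfam_zero]; norm_num
  rcases le_or_gt u δ with h | h
  · rw [Vfam_eq_left h0 h]
    have := VL_ge hδ.2 hκ hξ h0 h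
    linarith
  rcases eq_or_lt_of_le hu1 with h1 | h1
  · rw [h1, Vfam_one hδ.2]; norm_num
  · rw [Vfam_eq_right hδ.1 h h1]
    have := VR_ge hδ hκ hξ h h1
    linarith

lemma Vfam_le_one (hδ : δ ∈ Set.Ioo (0:ℝ) 1) (hκ : 0 < κ) (hξ : 0 < ξ) {u : ℝ}
    (hu : u ∈ Set.Icc (0:ℝ) 1) : Vfam δ κ ξ u ≤ 1 := by
  obtain ⟨hu0, hu1⟩ := hu
  rcases eq_or_lt_of_le hu0 with h0 | h0
  · rw [← h0, Vfam_zero]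
  rcases le_or_gt u δ with h | h
  · rw [Vfam_eq_left h0 h]; exact VL_le_one hδ.2 hu0
  rcases eq_or_lt_of_le hu1 with h1 | h1
  · rw [h1, Vfam_one hδ.2]
  · rw [Vfam_eq_right hδ.1 h h1]
    exact le_trans (VR_le hδ.1.le) hu1

/-- the key preimage identity. -/
lemma preimage_eq (hδ : δ ∈ Set.Ioo (0:ℝ) 1) (hκ : 0 < κ) (hξ : 0 < ξ) {v a : ℝ}
    (h0 : 0 ≤ v) (h1 : v < 1) (ha0 : 0 < a) (haδ : a ≤ δ) (hav : VL δ κ ξ a = v) :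
    Vfam δ κ ξ ⁻¹' (Set.Iic v) ∩ Set.Icc 0 1 = Set.Icc a (a + v) := by
  obtain ⟨hδ0, hδ1⟩ := hδ
  rcases eq_or_lt_of_le haδ with heq | hlt
  · -- a = δ, hence v = 0
    subst heq
    have hv0 : v = 0 := by rw [← hav, VL_delta hδ0 hξ]
    subst hv0
    ext u
    simp only [Set.mem_inter_iff, Set.mem_preimage, Set.mem_Iic, Set.mem_Icc, add_zero]
    constructor
    · rintro ⟨hVu, hu0, hu1⟩
      have hge := Vfam_nonneg ⟨hδ0, hδ1⟩ hκ hξ ⟨hu0, hu1⟩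
      have hVeq : Vfam a κ ξ u = 0 := le_antisymm hVu hge
      constructor
      · by_contra hlt'
        push_neg at hlt'
        rcases eq_or_lt_of_le hu0 with h' | h'
        · rw [← h', Vfam_zero] at hVeq; norm_num at hVeq
        · rw [Vfam_eq_left h' hlt'.le] at hVeq
          rcases eq_or_lt_of_le hlt'.le with h'' | h''
          · rw [h'', VL_delta hδ0 hξ] at hVeq
            exact absurd h'' hlt'.ne
          · have := VL_anti hδ1 hκ hξ h' h'' le_rfl
            rw [hVeq, VL_delta hδ0 hξ] at this
            exact absurd this (lt_irrefl 0)
      · by_contra hlt'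
        push_neg at hlt'
        rcases eq_or_lt_of_le hu1 with h' | h'
        · rw [h', Vfam_one hδ1] at hVeq; norm_num at hVeq
        · rw [Vfam_eq_right hδ0 hlt' h'] at hVeq
          have := VR_ge ⟨hδ0, hδ1⟩ hκ hξ hlt' h'
          linarith
    · rintro ⟨h1', h2'⟩
      have : u = a := le_antisymm h2' h1'
      subst this
      rw [Vfam_eq_left hδ0 le_rfl, VL_delta hδ0 hξ]
      exact ⟨le_rfl, hδ0.le, hδ1.le⟩
  · -- a < δ; then v > 0 and the dual point w = a + v works
    have hv0 : 0 < v := by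
      rw [← hav]
      have := VL_anti hδ1 hκ hξ ha0 hlt le_rfl
      rw [VL_delta hδ0 hξ] at this
      linarith
    obtain ⟨hwδ, hw1, hwv⟩ := dual ⟨hδ0, hδ1⟩ hκ hξ ha0 hlt
    rw [hav] at hwδ hw1 hwv
    ext u
    simp only [Set.mem_inter_iff, Set.mem_preimage, Set.mem_Iic, Set.mem_Icc]
    constructor
    · rintro ⟨hVu, hu0, hu1⟩
      rcases eq_or_lt_of_le hu0 with h' | h'
      · rw [← h', Vfam_zero] at hVu; linarith
      rcases le_or_gt u δ with h | h
      · rw [Vfam_eq_left h' h] at hVu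
        constructor
        · by_contra hua
          push_neg at hua
          have := VL_anti hδ1 hκ hξ h' hua haδ
          rw [hav] at this
          linarith
        · linarith [VL_ge hδ1 hκ hξ ha0 haδ, hav]
      · rcases eq_or_lt_of_le hu1 with h1' | h1'
        · rw [h1', Vfam_one hδ1] at hVu; linarith
        rw [Vfam_eq_right hδ0 h h1'] at hVu
        refine ⟨le_trans haδ h.le, ?_⟩
        by_contra huw
        push_neg at huw
        have := VR_mono ⟨hδ0, hδ1⟩ hκ hξ hwδ huw h1'
        rw [hwv] at this
        linarith
    · rintro ⟨h1', h2'⟩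
      have hu0 : 0 < u := lt_of_lt_of_le ha0 h1'
      have hu1 : u < 1 := lt_of_le_of_lt h2' hw1
      refine ⟨?_, hu0.le, hu1.le⟩
      rcases le_or_gt u δ with h | h
      · rw [Vfam_eq_left hu0 h]
        rcases eq_or_lt_of_le h1' with h'' | h''
        · rw [← h'', hav]
        · have := VL_anti hδ1 hκ hξ ha0 h'' h
          rw [hav] at this
          linarith
      · rw [Vfam_eq_right hδ0 h hu1]
        rcases eq_or_lt_of_le h2' with h'' | h''
        · rw [h'', hwv]
        · have := VR_mono ⟨hδ0, hδ1⟩ hκ hξ h h'' hw1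
          rw [hwv] at this
          linarith

lemma measurable_Vfam (hξ : 0 < ξ) : Measurable (Vfam δ κ ξ) := by
  unfold Vfam
  refine Measurable.ite (measurableSet_eq) measurable_const ?_
  refine Measurable.ite (measurableSet_le measurable_id measurable_const) ?_ ?_
  · refine (measurable_const.sub measurable_id).sub (measurable_const.mul ?_)
    exact Real.measurable_exp.comp (measurable_const.mul
      ((Real.continuous_rpow_const hξ.le).measurable.comp
        (Real.measurable_log.comp (measurable_id.div_const δ)).neg))
  · refine Measurable.ite (measurableSet_eq) measurable_const ?_
    refine measurable_id.sub (measurable_const.mul ?_)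
    exact Real.measurable_exp.comp (measurable_const.mul
      ((Real.continuous_rpow_const (by positivity : (0:ℝ) ≤ 1/ξ)).measurable.comp
        (Real.measurable_log.comp ((measurable_const.sub measurable_id).div_const (1 - δ))).neg))

end VfamAux

theorem stmt_16 {Ω : Type*} [MeasurableSpace Ω] (P : Measure Ω) [IsProbabilityMeasure P]
    (δ κ ξ : ℝ) (hδ : δ ∈ Set.Ioo (0:ℝ) 1) (hκ : 0 < κ) (hξ : 0 < ξ)
    (U : Ω → ℝ) (hUm : Measurable U)
    (hU : Measure.map U P = volume.restrict (Set.Icc (0:ℝ) 1)) :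
    Measure.map (fun ω => Vfam δ κ ξ (U ω)) P = volume.restrict (Set.Icc (0:ℝ) 1) := by
  have hVm : Measurable (Vfam δ κ ξ) := VfamAux.measurable_Vfam hξ
  have hcomp : (fun ω => Vfam δ κ ξ (U ω)) = Vfam δ κ ξ ∘ U := rfl
  rw [hcomp, ← Measure.map_map hVm hUm, hU]
  refine Measure.ext_of_Iic _ _ (fun v => ?_)
  rw [Measure.map_apply hVm measurableSet_Iic,
    Measure.restrict_apply (hVm measurableSet_Iic),
    Measure.restrict_apply measurableSet_Iic]
  rcases lt_or_ge v 0 with hv | hv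
  · have hL : Vfam δ κ ξ ⁻¹' Set.Iic v ∩ Set.Icc 0 1 = ∅ := by
      ext u
      simp only [Set.mem_inter_iff, Set.mem_preimage, Set.mem_Iic, Set.mem_empty_iff_false,
        iff_false, not_and]
      intro hVu hu
      exact absurd (le_trans (VfamAux.Vfam_nonneg hδ hκ hξ hu) hVu) (not_le.mpr hv)
    have hR : Set.Iic v ∩ Set.Icc (0:ℝ) 1 = ∅ := by
      ext u
      simp only [Set.mem_inter_iff, Set.mem_Iic, Set.mem_Icc, Set.mem_empty_iff_false,
        iff_false, not_and]
      intro h1 h2 _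
      exact absurd (le_trans h2 h1) (not_le.mpr hv)
    rw [hL, hR]
  rcases lt_or_ge v 1 with hv1 | hv1
  · obtain ⟨a, ha0, haδ, hav⟩ := VfamAux.exists_left hδ hκ hξ hv hv1
    rw [VfamAux.preimage_eq hδ hκ hξ hv hv1 ha0 haδ hav]
    have hR : Set.Iic v ∩ Set.Icc (0:ℝ) 1 = Set.Icc 0 v := by
      ext u
      simp only [Set.mem_inter_iff, Set.mem_Iic, Set.mem_Icc]
      constructor
      · rintro ⟨h1, h2, h3⟩; exact ⟨h2, h1⟩
      · rintro ⟨h1, h2⟩; exact ⟨h2, h1, le_trans h2 hv1.le⟩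
    rw [hR, Real.volume_Icc, Real.volume_Icc]
    congr 1
    ring
  · have hL : Vfam δ κ ξ ⁻¹' Set.Iic v ∩ Set.Icc 0 1 = Set.Icc 0 1 := by
      ext u
      simp only [Set.mem_inter_iff, Set.mem_preimage, Set.mem_Iic, Set.mem_Icc]
      constructor
      · rintro ⟨_, h⟩; exact h
      · intro h
        exact ⟨le_trans (VfamAux.Vfam_le_one hδ hκ hξ h) hv1, h⟩
    have hR : Set.Iic v ∩ Set.Icc (0:ℝ) 1 = Set.Icc 0 1 := by
      ext u
      simp only [Set.mem_inter_iff, Set.mem_Iic, Set.mem_Icc]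
      constructor
      · rintro ⟨_, h⟩; exact h
      · intro h
        exact ⟨le_trans h.2 hv1, h⟩
    rw [hL, hR]
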